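/- Let {ρ_j}_{j∈S} and {σ_j}_{j∈S} be finite families of positive semidefinite n×n complex matrices, and let ρ = blockDiagonal(ρ_j) and σ = blockDiagonal(σ_j) be the corresponding block-diagonal matrices (with blocks indexed by j ∈ S). Then √F(ρ, σ) = Σ_{j∈S} √F(ρ_j, σ_j); that is, ‖√ρ √σ‖₁ = Σ_{j∈S} ‖√ρ_j √σ_j‖₁. -/

import Mathlib

open scoped Kronecker ComplexOrder
open Matrix

/-- The positive semidefinite square root of a positive semidefinite matrix
(junk value `0` on matrices that are not positive semidefinite). -/
noncomputable def psdSqrt {n : Type*} [Fintype n] [DecidableEq n] (A : Matrix n n ℂ) :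
    Matrix n n ℂ :=
  letI := Classical.propDecidable A.PosSemidef
  if h : A.PosSemidef then
    (h.1.eigenvectorUnitary : Matrix n n ℂ) * diagonal ((↑) ∘ (Real.sqrt ∘ h.1.eigenvalues)) *
      (star h.1.eigenvectorUnitary : Matrix n n ℂ)
  else 0

/-- The trace norm `‖A‖₁ = tr √(A Aᴴ)`. -/
noncomputable def traceNorm {n : Type*} [Fintype n] [DecidableEq n] (A : Matrix n n ℂ) : ℝ :=
  (psdSqrt (A * Aᴴ)).trace.re

/-- The fidelity `F(A,B) = ‖√A √B‖₁²` between positive semidefinite matrices. -/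
noncomputable def fidelity {n : Type*} [Fintype n] [DecidableEq n] (A B : Matrix n n ℂ) : ℝ :=
  traceNorm (psdSqrt A * psdSqrt B) ^ 2

/-- The Choi matrix `J(Φ) = (1/n) Σ_{j,k} E_{jk} ⊗ Φ(E_{jk})` of a map on matrices. -/
noncomputable def choi {n m : Type*} [Fintype n] [DecidableEq n] [Fintype m]
    (Φ : Matrix n n ℂ → Matrix m m ℂ) : Matrix (n × m) (n × m) ℂ :=
  (Fintype.card n : ℂ)⁻¹ • ∑ j : n, ∑ k : n,
    (Matrix.single j k (1 : ℂ)) ⊗ₖ Φ (Matrix.single j k (1 : ℂ))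

/-- The extension `(id_F ⊗ Φ)` of a map on matrices by an ancilla of dimension `F`. -/
def tensorExt (F : ℕ) {n m : Type*} (Φ : Matrix n n ℂ → Matrix m m ℂ)
    (ρ : Matrix (Fin F × n) (Fin F × n) ℂ) : Matrix (Fin F × m) (Fin F × m) ℂ :=
  Matrix.of fun p q => Φ (Matrix.of fun i j => ρ (p.1, i) (q.1, j)) p.2 q.2

/-- The diamond norm `‖Φ‖◇`: the supremum of `‖(id_F ⊗ Φ)(ρ)‖₁` over all finite ancilla
dimensions `F` and density matrices `ρ`. -/
noncomputable def diamondNorm {n m : Type*} [Fintype n] [DecidableEq n] [Fintype m]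
    [DecidableEq m] (Φ : Matrix n n ℂ → Matrix m m ℂ) : ℝ :=
  sSup { x : ℝ | ∃ (F : ℕ) (ρ : Matrix (Fin F × n) (Fin F × n) ℂ),
    ρ.PosSemidef ∧ ρ.trace = 1 ∧ x = traceNorm (tensorExt F Φ ρ) }


lemma posSemidef_blockDiagonal' {n S : Type*} [Fintype n] [DecidableEq n] [Fintype S]
    [DecidableEq S] {ρ : S → Matrix n n ℂ} (h : ∀ j, (ρ j).PosSemidef) :
    (Matrix.blockDiagonal ρ).PosSemidef := by
  refine Matrix.PosSemidef.of_dotProduct_mulVec_nonneg ?_ ?_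
  · rw [Matrix.IsHermitian, Matrix.blockDiagonal_conjTranspose]
    exact congrArg _ (funext fun j => (h j).isHermitian)
  · intro x
    have key : star x ⬝ᵥ (Matrix.blockDiagonal ρ) *ᵥ x
        = ∑ k : S, star (fun i => x (i, k)) ⬝ᵥ (ρ k) *ᵥ (fun i => x (i, k)) := by
      simp only [dotProduct, Matrix.mulVec, Matrix.blockDiagonal_apply,
        Fintype.sum_prod_type, Pi.star_apply]
      rw [Finset.sum_comm]
      refine Finset.sum_congr rfl fun k _ => Finset.sum_congr rfl fun i _ => ?_
      congr 1
      rw [Finset.sum_comm]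
      simp [ite_mul]
    rw [key]
    exact Finset.sum_nonneg fun k _ => (h k).dotProduct_mulVec_nonneg _

lemma PosSemidef.trace_re_nonneg' {n : Type*} [Fintype n] {A : Matrix n n ℂ}
    (hA : A.PosSemidef) : 0 ≤ A.trace.re := by
  classical
  rw [Matrix.trace, Complex.re_sum]
  refine Finset.sum_nonneg fun i _ => ?_
  have := hA.dotProduct_mulVec_nonneg (Pi.single i 1)
  simpa [dotProduct, Matrix.mulVec, Pi.single_apply, Finset.sum_ite_eq] using (Complex.nonneg_iff.mp this).1

open scoped MatrixOrder in
lemma psdSqrt_of_posSemidef {n : Type*} [Fintype n] [DecidableEq n] {A : Matrix n n ℂ}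
    (h : A.PosSemidef) : psdSqrt A = CFC.sqrt A := by
  have hA : (0 : Matrix n n ℂ) ≤ A := h.nonneg
  rw [CFC.sqrt_eq_real_sqrt A, cfcₙ_eq_cfc (hf0 := Real.sqrt_zero), h.1.cfc_eq, psdSqrt, dif_pos h]
  rfl

open scoped MatrixOrder in
lemma psdSqrt_posSemidef {n : Type*} [Fintype n] [DecidableEq n] {A : Matrix n n ℂ}
    (h : A.PosSemidef) : (psdSqrt A).PosSemidef := by
  rw [psdSqrt_of_posSemidef h]; exact (CFC.sqrt_nonneg A).posSemidef

open scoped MatrixOrder in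
lemma psdSqrt_blockDiagonal {n S : Type*} [Fintype n] [DecidableEq n] [Fintype S]
    [DecidableEq S] {ρ : S → Matrix n n ℂ} (h : ∀ j, (ρ j).PosSemidef) :
    psdSqrt (Matrix.blockDiagonal ρ) = Matrix.blockDiagonal fun j => psdSqrt (ρ j) := by
  have hB := posSemidef_blockDiagonal' h
  have hBD : (Matrix.blockDiagonal fun j => psdSqrt (ρ j)).PosSemidef :=
    posSemidef_blockDiagonal' fun j => psdSqrt_posSemidef (h j)
  rw [psdSqrt_of_posSemidef hB]
  refine CFC.sqrt_unique ?_ hBD.nonneg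
  rw [← Matrix.blockDiagonal_mul]
  exact congrArg _ (funext fun j => by
    rw [psdSqrt_of_posSemidef (h j), CFC.sqrt_mul_sqrt_self _ (h j).nonneg])

lemma traceNorm_blockDiagonal {n S : Type*} [Fintype n] [DecidableEq n] [Fintype S]
    [DecidableEq S] (A : S → Matrix n n ℂ) :
    traceNorm (Matrix.blockDiagonal A) = ∑ j, traceNorm (A j) := by
  unfold traceNorm
  rw [Matrix.blockDiagonal_conjTranspose, ← Matrix.blockDiagonal_mul,
    psdSqrt_blockDiagonal (fun j => Matrix.posSemidef_self_mul_conjTranspose (A j)),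
    Matrix.trace_blockDiagonal, Complex.re_sum]

lemma traceNorm_nonneg' {n : Type*} [Fintype n] [DecidableEq n] (A : Matrix n n ℂ) :
    0 ≤ traceNorm A := by
  rw [traceNorm]
  exact PosSemidef.trace_re_nonneg'
    (psdSqrt_posSemidef (Matrix.posSemidef_self_mul_conjTranspose A))

/-- For block-diagonal positive semidefinite matrices,
`√F(ρ, σ) = Σ_j √F(ρ_j, σ_j)`, i.e. `‖√ρ √σ‖₁ = Σ_j ‖√ρ_j √σ_j‖₁`. -/
theorem sqrt_fidelity_blockDiagonal {n S : Type*} [Fintype n] [DecidableEq n]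
    [Fintype S] [DecidableEq S]
    (ρ σ : S → Matrix n n ℂ) (hρ : ∀ j, (ρ j).PosSemidef) (hσ : ∀ j, (σ j).PosSemidef) :
    Real.sqrt (fidelity (Matrix.blockDiagonal ρ) (Matrix.blockDiagonal σ))
        = ∑ j, Real.sqrt (fidelity (ρ j) (σ j))
      ∧ traceNorm (psdSqrt (Matrix.blockDiagonal ρ) * psdSqrt (Matrix.blockDiagonal σ))
        = ∑ j, traceNorm (psdSqrt (ρ j) * psdSqrt (σ j)) := by
  have h2 : traceNorm (psdSqrt (Matrix.blockDiagonal ρ) * psdSqrt (Matrix.blockDiagonal σ))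
      = ∑ j, traceNorm (psdSqrt (ρ j) * psdSqrt (σ j)) := by
    rw [psdSqrt_blockDiagonal hρ, psdSqrt_blockDiagonal hσ, ← Matrix.blockDiagonal_mul,
      traceNorm_blockDiagonal]
  refine ⟨?_, h2⟩
  unfold fidelity
  rw [Real.sqrt_sq (traceNorm_nonneg' _), h2]
  exact Finset.sum_congr rfl fun j _ => (Real.sqrt_sq (traceNorm_nonneg' _)).symm
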